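/- Let r, s, t, u be nonzero real numbers with |s/r| < 1 and |u/t| < 1. Then the α-dual of B[C_f] is L_u: a double sequence a = (a_{kl}) satisfies Σ_{k,l} |a_{kl} x_{kl}| < ∞ for every x ∈ B[C_f] if and only if Σ_{k,l} |a_{kl}| < ∞. -/

import Mathlib

open Finset

noncomputable section

/-- The four-dimensional generalized difference matrix `B(r,s,t,u)` acting on a
double sequence `x : ℕ × ℕ → ℂ`; terms with a negative index are taken to be `0`. -/
def Btrans (r s t u : ℝ) (x : ℕ × ℕ → ℂ) : ℕ × ℕ → ℂ := fun p =>
  (s * u : ℂ) * (if p.1 = 0 ∨ p.2 = 0 then 0 else x (p.1 - 1, p.2 - 1)) +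
  (s * t : ℂ) * (if p.1 = 0 then 0 else x (p.1 - 1, p.2)) +
  (r * u : ℂ) * (if p.2 = 0 then 0 else x (p.1, p.2 - 1)) +
  (r * t : ℂ) * x p

/-- `x` is strongly almost convergent to `L` ("[f2]-lim x = L"). -/
def StronglyAlmostConvTo (x : ℕ × ℕ → ℂ) (L : ℂ) : Prop :=
  ∀ ε > (0 : ℝ), ∃ Q : ℕ, ∀ q q' : ℕ, Q ≤ q → Q ≤ q' → ∀ m n : ℕ,
    (1 / (((q : ℝ) + 1) * ((q' : ℝ) + 1))) *
      ∑ k ∈ Finset.range (q + 1), ∑ l ∈ Finset.range (q' + 1),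
        ‖(x (m + k, n + l) - L)‖ < ε

/-- `x` is almost convergent to `L` ("f2-lim x = L"). -/
def AlmostConvTo (x : ℕ × ℕ → ℂ) (L : ℂ) : Prop :=
  ∀ ε > (0 : ℝ), ∃ Q : ℕ, ∀ q q' : ℕ, Q ≤ q → Q ≤ q' → ∀ m n : ℕ,
    ‖((1 / (((q : ℂ) + 1) * ((q' : ℂ) + 1))) *
      (∑ k ∈ Finset.range (q + 1), ∑ l ∈ Finset.range (q' + 1), x (m + k, n + l)) - L)‖ < ε

/-- The set of values whose supremum is the `[C_f]`-norm of `y`. -/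
def CfNormSet (y : ℕ × ℕ → ℂ) : Set ℝ :=
  {v | ∃ q q' m n : ℕ, v = (1 / (((q : ℝ) + 1) * ((q' : ℝ) + 1))) *
    ∑ k ∈ Finset.range (q + 1), ∑ l ∈ Finset.range (q' + 1), ‖(y (m + k, n + l))‖}

/-- The `[C_f]`-norm. -/
def CfNorm (y : ℕ × ℕ → ℂ) : ℝ := sSup (CfNormSet y)

/-- The formal inverse transform of `B(r,s,t,u)`. -/
def Binv (r s t u : ℝ) (y : ℕ × ℕ → ℂ) : ℕ × ℕ → ℂ := fun p =>
  (1 / (r * t : ℂ)) * ∑ k ∈ Finset.range (p.1 + 1), ∑ l ∈ Finset.range (p.2 + 1),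
    ((-s : ℂ) / r) ^ (p.1 - k) * ((-u : ℂ) / t) ^ (p.2 - l) * y (k, l)

/-- Pringsheim convergence of a double sequence. -/
def PConvTo (s : ℕ × ℕ → ℂ) (S : ℂ) : Prop :=
  ∀ ε > (0 : ℝ), ∃ N : ℕ, ∀ m n : ℕ, N ≤ m → N ≤ n → ‖(s (m, n) - S)‖ < ε

/-- Boundedness of a double sequence. -/
def Bdd2 (s : ℕ × ℕ → ℂ) : Prop := ∃ M : ℝ, ∀ m n : ℕ, ‖(s (m, n))‖ ≤ M

/-- bp-convergence: bounded Pringsheim convergence. -/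
def BPConvTo (s : ℕ × ℕ → ℂ) (S : ℂ) : Prop := Bdd2 s ∧ PConvTo s S

/-- Rectangular partial sums of a double series. -/
def PartialSums (c : ℕ × ℕ → ℂ) : ℕ × ℕ → ℂ := fun p =>
  ∑ k ∈ Finset.range (p.1 + 1), ∑ l ∈ Finset.range (p.2 + 1), c (k, l)

/-- bp-convergence of the double series `Σ c_{kl}`. -/
def BPSeriesConv (c : ℕ × ℕ → ℂ) : Prop := ∃ S, BPConvTo (PartialSums c) S

/-- Pringsheim convergence of a real double sequence. -/
def PConvToR (s : ℕ × ℕ → ℝ) (S : ℝ) : Prop :=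
  ∀ ε > (0 : ℝ), ∃ N : ℕ, ∀ m n : ℕ, N ≤ m → N ≤ n → |s (m, n) - S| < ε

/-- bp-convergence of a real double sequence. -/
def BPConvToR (s : ℕ × ℕ → ℝ) (S : ℝ) : Prop :=
  (∃ M : ℝ, ∀ m n : ℕ, |s (m, n)| ≤ M) ∧ PConvToR s S

/-- The rectangle `{(j,k) : m ≤ j ≤ m+p-1, n ≤ k ≤ n+q-1}`. -/
def rectSet (m n p q : ℕ) : Set (ℕ × ℕ) :=
  {jk | m ≤ jk.1 ∧ jk.1 ≤ m + p - 1 ∧ n ≤ jk.2 ∧ jk.2 ≤ n + q - 1}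

/-- `E` is uniformly of zero density. -/
def UnifZeroDensity (E : Set (ℕ × ℕ)) : Prop :=
  ∀ ε > (0 : ℝ), ∃ P : ℕ, ∀ p q : ℕ, P ≤ p → P ≤ q → ∀ m n : ℕ,
    ((E ∩ rectSet m n p q).ncard : ℝ) ≤ ε * p * q

/-- The inner sums `Σ_{j=k}^{m} Σ_{i=l}^{n} (−s/r)^{j−k} (−u/t)^{i−l} a_{ji}`. -/
def innerS (r s t u : ℝ) (a : ℕ × ℕ → ℂ) (k l m n : ℕ) : ℂ :=
  ∑ j ∈ Finset.Icc k m, ∑ i ∈ Finset.Icc l n,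
    ((-s : ℂ) / r) ^ (j - k) * ((-u : ℂ) / t) ^ (i - l) * a (j, i)

/-- The matrix `d_{mnkl}(a)` (taken to be `0` when `k > m` or `l > n`). -/
def dmat (r s t u : ℝ) (a : ℕ × ℕ → ℂ) (m n k l : ℕ) : ℂ :=
  innerS r s t u a k l m n / (r * t : ℂ)

/-- The double difference `Δ₁₁ a_{mnkl}`. -/
def Delta11 (A : ℕ × ℕ → ℕ × ℕ → ℂ) (m n k l : ℕ) : ℂ :=
  A (m, n) (k, l) - A (m, n) (k + 1, l) - A (m, n) (k, l + 1) + A (m, n) (k + 1, l + 1)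

/-- The matrix `e_{mnkl}` associated with a four-dimensional matrix `A`
(taken to be `0` when `k > m` or `l > n`). -/
def emat (r s t u : ℝ) (A : ℕ × ℕ → ℕ × ℕ → ℂ) (m n k l : ℕ) : ℂ :=
  ∑ i ∈ Finset.Icc k m, ∑ j ∈ Finset.Icc l n,
    ((-s : ℂ) / r) ^ (i - k) * ((-u : ℂ) / t) ^ (j - l) * A (m, n) (i, j) / (r * t : ℂ)

/-- `Δ₁₁` applied to the `e`-matrix. -/
def Delta11e (r s t u : ℝ) (A : ℕ × ℕ → ℕ × ℕ → ℂ) (m n k l : ℕ) : ℂ :=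
  emat r s t u A m n k l - emat r s t u A m n (k + 1) l -
    emat r s t u A m n k (l + 1) + emat r s t u A m n (k + 1) (l + 1)

end

lemma oneD (c d : ℂ) (hc : c ≠ 0) (y z : ℕ → ℂ)
    (hz : ∀ n, z n = c * y n + d * (if n = 0 then 0 else y (n-1))) :
    ∀ n, ∑ k ∈ Finset.range (n+1), (-d/c)^(n-k) * z k = c * y n := by
  intro n
  induction n with
  | zero => simp [hz]
  | succ n ih =>
    rw [Finset.sum_range_succ]
    have h1 : ∑ k ∈ Finset.range (n+1), (-d/c)^(n+1-k) * z k
        = (-d/c) * ∑ k ∈ Finset.range (n+1), (-d/c)^(n-k) * z k := by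
      rw [Finset.mul_sum]
      apply Finset.sum_congr rfl
      intro k hk
      rw [Finset.mem_range] at hk
      have : n + 1 - k = (n - k) + 1 := by omega
      rw [this, pow_succ]; ring
    rw [h1, ih, hz (n+1)]
    simp only [Nat.succ_ne_zero, if_false, Nat.add_sub_cancel, Nat.sub_self, pow_zero, one_mul]
    field_simp; ring

lemma inv_formula (r s t u : ℝ) (hr : r ≠ 0) (ht : t ≠ 0) (x : ℕ × ℕ → ℂ) (m n : ℕ) :
    ∑ k ∈ Finset.range (m+1), ∑ l ∈ Finset.range (n+1),
      ((-s:ℂ)/r)^(m-k) * ((-u:ℂ)/t)^(n-l) * Btrans r s t u x (k,l)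
      = (r*t:ℂ) * x (m,n) := by
  have hrc : (r:ℂ) ≠ 0 := by exact_mod_cast hr
  have htc : (t:ℂ) ≠ 0 := by exact_mod_cast ht
  set w : ℕ → ℕ → ℂ := fun k l => (r:ℂ) * x (k,l) + (s:ℂ) * (if k = 0 then 0 else x (k-1, l)) with hw
  have stepA : ∀ k nn : ℕ, ∑ l ∈ Finset.range (nn+1), ((-u:ℂ)/t)^(nn-l) * Btrans r s t u x (k,l)
      = (t:ℂ) * w k nn := by
    intro k nn
    have := oneD (t:ℂ) (u:ℂ) htc (fun l => w k l) (fun l => Btrans r s t u x (k,l))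
      (by
        intro l
        simp only [Btrans, hw]
        by_cases hk : k = 0 <;> by_cases hl : l = 0 <;> simp [hk, hl] <;> ring) nn
    simpa using this
  have inner : ∀ k, ∑ l ∈ Finset.range (n+1),
      ((-s:ℂ)/r)^(m-k) * ((-u:ℂ)/t)^(n-l) * Btrans r s t u x (k,l)
      = ((-s:ℂ)/r)^(m-k) * ((t:ℂ) * w k n) := by
    intro k
    rw [← stepA k n, Finset.mul_sum]
    apply Finset.sum_congr rfl; intro l _; ring
  rw [Finset.sum_congr rfl (fun k _ => inner k)]
  have hfac : ∑ k ∈ Finset.range (m+1), ((-s:ℂ)/r)^(m-k) * ((t:ℂ) * w k n)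
      = (t:ℂ) * ∑ k ∈ Finset.range (m+1), ((-s:ℂ)/r)^(m-k) * w k n := by
    rw [Finset.mul_sum]; apply Finset.sum_congr rfl; intro k _; ring
  rw [hfac, oneD (r:ℂ) (s:ℂ) hrc (fun k => x (k, n)) (fun k => w k n) (by intro k; simp [hw]) m]
  ring

lemma geo_le (c : ℝ) (h0 : 0 ≤ c) (h1 : c < 1) (n : ℕ) :
    ∑ i ∈ Finset.range n, c^i ≤ 1/(1-c) := by
  have hc1 : c ≠ 1 := ne_of_lt h1
  have h1c : 0 < 1 - c := by linarith
  rw [geom_sum_eq hc1]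
  have heq : (c ^ n - 1)/(c - 1) = (1 - c^n)/(1 - c) := by
    rw [div_eq_div_iff (by intro h; apply hc1; linarith : c - 1 ≠ 0) (ne_of_gt h1c)]
    ring
  rw [heq]
  have : 0 ≤ c ^ n := pow_nonneg h0 n
  gcongr
  linarith

lemma geo_le' (c : ℝ) (h0 : 0 ≤ c) (h1 : c < 1) (m : ℕ) :
    ∑ k ∈ Finset.range (m+1), c^(m-k) ≤ 1/(1-c) := by
  have := Finset.sum_range_reflect (fun i => c^i) (m+1)
  simp only [Nat.add_sub_cancel] at this
  rw [this]
  exact geo_le c h0 h1 (m+1)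

/-- If `|s/r| < 1` and `|u/t| < 1`, then the α-dual of `B[C_f]` is
`L_u`: `Σ_{k,l} |a_{kl} x_{kl}| < ∞` for every `x ∈ B[C_f]` iff `Σ_{k,l} |a_{kl}| < ∞`. -/
theorem stmt14 (r s t u : ℝ) (hr : r ≠ 0) (hs : s ≠ 0) (ht : t ≠ 0) (hu : u ≠ 0)
    (hsr : |s / r| < 1) (hut : |u / t| < 1) (a : ℕ × ℕ → ℂ) :
    (∀ x : ℕ × ℕ → ℂ, (∃ L, StronglyAlmostConvTo (Btrans r s t u x) L) →
      Summable (fun p : ℕ × ℕ => ‖(a p * x p)‖)) ↔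
    Summable (fun p : ℕ × ℕ => ‖(a p)‖) := by
  constructor
  · -- forward: test against the constant-one sequence
    intro h
    set B1 : ℕ × ℕ → ℂ := Btrans r s t u (fun _ => 1) with hB1
    set L : ℂ := ((s:ℂ)+r)*((u:ℂ)+t) with hLdef
    set C : ℝ := ‖(B1 (0,0) - L)‖ + ‖(B1 (0,1) - L)‖ +
      ‖(B1 (1,0) - L)‖ with hCdef
    have hC : 0 ≤ C := by positivity
    have hpt : ∀ m n : ℕ, ‖(B1 (m,n) - L)‖ ≤
        (if m = 0 then C else 0) + (if n = 0 then C else 0) := by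
      intro m n
      by_cases hm : m = 0 <;> by_cases hn : n = 0
      · subst hm; subst hn
        simp only [eq_self_iff_true, ite_true]
        have h2 : 0 ≤ ‖(B1 (0,1) - L)‖ := norm_nonneg _
        have h3 : 0 ≤ ‖(B1 (1,0) - L)‖ := norm_nonneg _
        rw [hCdef]; linarith
      · subst hm
        have e1 : B1 (0, n) = B1 (0, 1) := by simp [hB1, Btrans, hn]
        rw [e1]
        simp only [eq_self_iff_true, ite_true, if_neg hn, add_zero]
        have h1 : 0 ≤ ‖(B1 (0,0) - L)‖ := norm_nonneg _
        have h3 : 0 ≤ ‖(B1 (1,0) - L)‖ := norm_nonneg _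
        rw [hCdef]; linarith
      · subst hn
        have e1 : B1 (m, 0) = B1 (1, 0) := by simp [hB1, Btrans, hm]
        rw [e1]
        simp only [if_neg hm, eq_self_iff_true, ite_true, zero_add]
        have h1 : 0 ≤ ‖(B1 (0,0) - L)‖ := norm_nonneg _
        have h2 : 0 ≤ ‖(B1 (0,1) - L)‖ := norm_nonneg _
        rw [hCdef]; linarith
      · have e1 : B1 (m, n) = L := by
          simp [hB1, Btrans, hm, hn, hLdef]; push_cast; ring
        rw [e1]
        simp [hm, hn]
    have hsum0 : ∀ (N : ℕ) (mm : ℕ),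
        ∑ k ∈ Finset.range (N+1), (if mm + k = 0 then C else 0) ≤ C := by
      intro N mm
      calc ∑ k ∈ Finset.range (N+1), (if mm + k = 0 then C else 0)
          ≤ ∑ k ∈ Finset.range (N+1), (if k = 0 then C else 0) := by
            apply Finset.sum_le_sum
            intro k _
            by_cases h1 : mm + k = 0
            · have hk : k = 0 := by omega
              have hmm : mm = 0 := by omega
              simp [hk, hmm]
            · split_ifs <;> simp [hC]
        _ = C := by
            rw [Finset.sum_ite_eq' (Finset.range (N+1)) 0 (fun _ => C)]
            simp
    have hwin : ∀ q q' m n : ℕ,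
        ∑ k ∈ Finset.range (q+1), ∑ l ∈ Finset.range (q'+1),
          ‖(B1 (m + k, n + l) - L)‖
          ≤ ((q':ℝ)+1)*C + ((q:ℝ)+1)*C := by
      intro q q' m n
      have step1 : ∑ k ∈ Finset.range (q+1), ∑ l ∈ Finset.range (q'+1),
            ‖(B1 (m + k, n + l) - L)‖
          ≤ ∑ k ∈ Finset.range (q+1), ∑ l ∈ Finset.range (q'+1),
            ((if m + k = 0 then C else 0) + (if n + l = 0 then C else 0)) := by
        apply Finset.sum_le_sum; intro k _
        apply Finset.sum_le_sum; intro l _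
        exact hpt (m+k) (n+l)
      refine step1.trans ?_
      have split : ∑ k ∈ Finset.range (q+1), ∑ l ∈ Finset.range (q'+1),
            ((if m + k = 0 then C else 0) + (if n + l = 0 then C else 0))
          = (∑ k ∈ Finset.range (q+1), ∑ l ∈ Finset.range (q'+1), (if m + k = 0 then C else 0))
          + (∑ k ∈ Finset.range (q+1), ∑ l ∈ Finset.range (q'+1), (if n + l = 0 then C else 0)) := by
        rw [← Finset.sum_add_distrib]
        apply Finset.sum_congr rfl; intro k _
        rw [← Finset.sum_add_distrib]
      rw [split]
      have hA : ∑ k ∈ Finset.range (q+1), ∑ l ∈ Finset.range (q'+1),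
            (if m + k = 0 then C else 0) ≤ ((q':ℝ)+1)*C := by
        have he : ∀ k, ∑ l ∈ Finset.range (q'+1), (if m + k = 0 then C else 0)
            = ((q':ℝ)+1) * (if m + k = 0 then C else 0) := by
          intro k
          rw [Finset.sum_const, Finset.card_range, nsmul_eq_mul]
          push_cast; ring
        rw [Finset.sum_congr rfl (fun k _ => he k), ← Finset.mul_sum]
        have := hsum0 q m
        have hq : (0:ℝ) ≤ (q':ℝ)+1 := by positivity
        nlinarith
      have hB : ∑ k ∈ Finset.range (q+1), ∑ l ∈ Finset.range (q'+1),
            (if n + l = 0 then C else 0) ≤ ((q:ℝ)+1)*C := by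
        calc ∑ k ∈ Finset.range (q+1), ∑ l ∈ Finset.range (q'+1),
              (if n + l = 0 then C else 0)
            ≤ ∑ _k ∈ Finset.range (q+1), C := Finset.sum_le_sum (fun k _ => hsum0 q' n)
          _ = ((q:ℝ)+1)*C := by
              rw [Finset.sum_const, Finset.card_range, nsmul_eq_mul]; push_cast; ring
      linarith
    have hBx : StronglyAlmostConvTo B1 L := by
      intro ε hε
      obtain ⟨N, hN⟩ := exists_nat_gt (2*C/ε)
      refine ⟨N, ?_⟩
      intro q q' hq hq' m n
      have hP : (0:ℝ) < (q:ℝ)+1 := by positivity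
      have hP' : (0:ℝ) < (q':ℝ)+1 := by positivity
      have hNP : ((N:ℝ)+1) ≤ (q:ℝ)+1 := by
        have : (N:ℝ) ≤ (q:ℝ) := by exact_mod_cast hq
        linarith
      have hNP' : ((N:ℝ)+1) ≤ (q':ℝ)+1 := by
        have : (N:ℝ) ≤ (q':ℝ) := by exact_mod_cast hq'
        linarith
      have hNpos : (0:ℝ) < (N:ℝ)+1 := by positivity
      calc (1 / (((q:ℝ)+1) * ((q':ℝ)+1))) *
            ∑ k ∈ Finset.range (q+1), ∑ l ∈ Finset.range (q'+1),
              ‖(B1 (m + k, n + l) - L)‖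
          ≤ (1 / (((q:ℝ)+1) * ((q':ℝ)+1))) * (((q':ℝ)+1)*C + ((q:ℝ)+1)*C) := by
            apply mul_le_mul_of_nonneg_left (hwin q q' m n) (by positivity)
        _ = C/((q:ℝ)+1) + C/((q':ℝ)+1) := by field_simp
        _ ≤ C/((N:ℝ)+1) + C/((N:ℝ)+1) := by gcongr
        _ = 2*C/((N:ℝ)+1) := by ring
        _ < ε := by
            rw [div_lt_iff₀ hNpos]
            rw [div_lt_iff₀ hε] at hN
            nlinarith
    have := h (fun _ => 1) ⟨L, hBx⟩
    simpa using this
  · -- reverse: Bx bounded ⇒ x bounded, then comparison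
    intro ha x hx
    obtain ⟨L, hL⟩ := hx
    obtain ⟨Q, hQ⟩ := hL 1 one_pos
    set Bx : ℕ × ℕ → ℂ := Btrans r s t u x with hBxdef
    set M : ℝ := ‖L‖ + ((Q:ℝ)+1) * ((Q:ℝ)+1) with hMdef
    have hM : ∀ m n : ℕ, ‖(Bx (m, n))‖ ≤ M := by
      intro m n
      have h3 := hQ Q Q le_rfl le_rfl m n
      have hPpos : (0:ℝ) < ((Q:ℝ)+1) * ((Q:ℝ)+1) := by positivity
      have hS : ∑ k ∈ Finset.range (Q+1), ∑ l ∈ Finset.range (Q+1),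
          ‖(Bx (m + k, n + l) - L)‖ < ((Q:ℝ)+1) * ((Q:ℝ)+1) := by
        rw [one_div_mul_eq_div] at h3
        exact (div_lt_one hPpos).mp h3
      have hterm : ‖(Bx (m, n) - L)‖
          ≤ ∑ k ∈ Finset.range (Q+1), ∑ l ∈ Finset.range (Q+1),
            ‖(Bx (m + k, n + l) - L)‖ := by
        have h0 : (0:ℕ) ∈ Finset.range (Q+1) := by simp
        have t1 : ‖(Bx (m + 0, n + 0) - L)‖
            ≤ ∑ l ∈ Finset.range (Q+1), ‖(Bx (m + 0, n + l) - L)‖ :=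
          Finset.single_le_sum (f := fun l => ‖(Bx (m + 0, n + l) - L)‖)
            (fun i _ => norm_nonneg _) h0
        have t2 : ∑ l ∈ Finset.range (Q+1), ‖(Bx (m + 0, n + l) - L)‖
            ≤ ∑ k ∈ Finset.range (Q+1), ∑ l ∈ Finset.range (Q+1),
              ‖(Bx (m + k, n + l) - L)‖ :=
          Finset.single_le_sum (f := fun k => ∑ l ∈ Finset.range (Q+1),
            ‖(Bx (m + k, n + l) - L)‖)
            (fun i _ => Finset.sum_nonneg (fun j _ => norm_nonneg _)) h0
        simpa using t1.trans t2
      have : ‖(Bx (m, n))‖ ≤ ‖(Bx (m, n) - L)‖ + ‖L‖ := by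
        calc ‖(Bx (m, n))‖ = ‖((Bx (m,n) - L) + L)‖ := by ring_nf
          _ ≤ ‖(Bx (m, n) - L)‖ + ‖L‖ := norm_add_le _ _
      rw [hMdef]; linarith
    -- bound on x
    set ca : ℝ := |s/r| with hca
    set cb : ℝ := |u/t| with hcb
    have hca0 : 0 ≤ ca := abs_nonneg _
    have hcb0 : 0 ≤ cb := abs_nonneg _
    have habs1 : ‖((-s:ℂ)/r)‖ = ca := by
      rw [norm_div]
      simp [hca, abs_div]
    have habs2 : ‖((-u:ℂ)/t)‖ = cb := by
      rw [norm_div]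
      simp [hcb, abs_div]
    have hM0 : 0 ≤ M := le_trans (norm_nonneg (Bx (0,0))) (hM 0 0)
    have hrt : (0:ℝ) < ‖((r*t:ℂ))‖ := by
      apply norm_pos_iff.mpr
      push_cast
      exact mul_ne_zero (by exact_mod_cast hr) (by exact_mod_cast ht)
    set K : ℝ := (1/(1-ca)) * ((1/(1-cb)) * M) / ‖((r*t:ℂ))‖ with hK
    have hxbd : ∀ p : ℕ × ℕ, ‖(x p)‖ ≤ K := by
      rintro ⟨m, n⟩
      have hformula := inv_formula r s t u hr ht x m n
      have h1 : ‖((r*t:ℂ))‖ * ‖(x (m,n))‖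
          = ‖(∑ k ∈ Finset.range (m+1), ∑ l ∈ Finset.range (n+1),
            ((-s:ℂ)/r)^(m-k) * ((-u:ℂ)/t)^(n-l) * Bx (k,l))‖ := by
        rw [← norm_mul, hformula]
      have h2 : ‖(∑ k ∈ Finset.range (m+1), ∑ l ∈ Finset.range (n+1),
            ((-s:ℂ)/r)^(m-k) * ((-u:ℂ)/t)^(n-l) * Bx (k,l))‖
          ≤ (1/(1-ca)) * ((1/(1-cb)) * M) := by
        calc ‖(∑ k ∈ Finset.range (m+1), ∑ l ∈ Finset.range (n+1),
              ((-s:ℂ)/r)^(m-k) * ((-u:ℂ)/t)^(n-l) * Bx (k,l))‖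
            ≤ ∑ k ∈ Finset.range (m+1), ‖(∑ l ∈ Finset.range (n+1),
              ((-s:ℂ)/r)^(m-k) * ((-u:ℂ)/t)^(n-l) * Bx (k,l))‖ := norm_sum_le _ _
          _ ≤ ∑ k ∈ Finset.range (m+1), ∑ l ∈ Finset.range (n+1),
              ‖(((-s:ℂ)/r)^(m-k) * ((-u:ℂ)/t)^(n-l) * Bx (k,l))‖ :=
              Finset.sum_le_sum (fun k _ => norm_sum_le _ _)
          _ = ∑ k ∈ Finset.range (m+1), ∑ l ∈ Finset.range (n+1),
              ca^(m-k) * (cb^(n-l) * ‖(Bx (k,l))‖) := by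
              apply Finset.sum_congr rfl; intro k _
              apply Finset.sum_congr rfl; intro l _
              rw [norm_mul, norm_mul, norm_pow, norm_pow, habs1, habs2]; ring
          _ ≤ ∑ k ∈ Finset.range (m+1), ∑ l ∈ Finset.range (n+1),
              ca^(m-k) * (cb^(n-l) * M) := by
              apply Finset.sum_le_sum; intro k _
              apply Finset.sum_le_sum; intro l _
              have h4 : (0:ℝ) ≤ ca^(m-k) := pow_nonneg hca0 _
              have h5 : (0:ℝ) ≤ cb^(n-l) := pow_nonneg hcb0 _
              exact mul_le_mul_of_nonneg_left
                (mul_le_mul_of_nonneg_left (hM k l) h5) h4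
          _ = ∑ k ∈ Finset.range (m+1), ca^(m-k) *
              ((∑ l ∈ Finset.range (n+1), cb^(n-l)) * M) := by
              apply Finset.sum_congr rfl; intro k _
              rw [Finset.sum_mul, Finset.mul_sum]
          _ ≤ ∑ k ∈ Finset.range (m+1), ca^(m-k) * ((1/(1-cb)) * M) := by
              apply Finset.sum_le_sum; intro k _
              have h4 : (0:ℝ) ≤ ca^(m-k) := pow_nonneg hca0 _
              have h6 := geo_le' cb hcb0 hut n
              exact mul_le_mul_of_nonneg_left
                (mul_le_mul_of_nonneg_right h6 hM0) h4
          _ = (∑ k ∈ Finset.range (m+1), ca^(m-k)) * ((1/(1-cb)) * M) := by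
              rw [Finset.sum_mul]
          _ ≤ (1/(1-ca)) * ((1/(1-cb)) * M) := by
              have h6 : (0:ℝ) ≤ (1/(1-cb)) * M := by
                have : (0:ℝ) < 1 - cb := by linarith
                positivity
              exact mul_le_mul_of_nonneg_right (geo_le' ca hca0 hsr m) h6
      rw [hK, le_div_iff₀ hrt, mul_comm]
      rw [h1] at *
      linarith [h1 ▸ h2]
    refine Summable.of_nonneg_of_le
      (fun p => norm_nonneg _) (fun p => ?_) (ha.mul_left K)
    rw [norm_mul, mul_comm]
    exact mul_le_mul_of_nonneg_right (hxbd p) (norm_nonneg _)
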